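/- Let K ⊂ ℂⁿ be a convex body with 0 in its interior whose gauge g_K is differentiable in a neighborhood of ∂K, and let γ : [0,T] → ∂K be a closed characteristic, i.e. a C¹ curve with γ(0) = γ(T) and γ̇(t) = J∇g_K(γ(t)) for all t. Then the g_K-length of γ satisfies ∫₀ᵀ g_K(γ̇(t)) dt ≤ T · sup{ω(x,y) : x, y ∈ K°} = T / c_J(K). -/

import Mathlib

noncomputable section

open Set intervalIntegral

/-- `ℂⁿ`, the complex Euclidean space. -/
abbrev Cn (n : ℕ) := EuclideanSpace ℂ (Fin n)

/-- The standard symplectic form `ω(x,y) = Im⟨x,y⟩` (inner product conjugate-linear in the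
first argument). -/
def symp {n : ℕ} (x y : Cn n) : ℝ := (inner ℂ x y : ℂ).im

/-- `J`, multiplication by the imaginary unit. -/
def Jmul {n : ℕ} (x : Cn n) : Cn n := Complex.I • x

/-- The polar body `K° = {y : ⟨x,y⟩_ℝ ≤ 1 for all x ∈ K}`. -/
def polarC {n : ℕ} (K : Set (Cn n)) : Set (Cn n) :=
  {y | ∀ x ∈ K, (inner ℂ x y : ℂ).re ≤ 1}

/-- `c_J(K)`, defined by `c_J(K)⁻¹ = sup {ω(x,y) : x, y ∈ K°}`. -/
def cJ {n : ℕ} (K : Set (Cn n)) : ℝ :=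
  (sSup {r : ℝ | ∃ x ∈ polarC K, ∃ y ∈ polarC K, r = symp x y})⁻¹
open Pointwise

lemma rinner_eq {n : ℕ} (x y : Cn n) : (inner ℝ x y : ℝ) = (inner ℂ x y : ℂ).re := by
  simp [PiLp.inner_apply, Complex.inner, RCLike.inner_apply, Complex.re_sum]

section Subgrad
variable {E : Type*} [NormedAddCommGroup E] [InnerProductSpace ℝ E] [CompleteSpace E]

lemma subgrad {f : E → ℝ} (hf : ConvexOn ℝ univ f) {x g : E}
    (hx : HasGradientAt f g x) (y : E) : f x + (inner ℝ g (y - x) : ℝ) ≤ f y := by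
  set φ : ℝ → ℝ := fun s => f (x + s • (y - x)) with hφdef
  have hline : HasDerivAt (fun s : ℝ => x + s • (y - x)) (y - x) 0 := by
    simpa using ((hasDerivAt_id (0:ℝ)).smul_const (y - x)).const_add x
  have hφ : HasDerivAt φ ((inner ℝ g (y - x) : ℝ)) 0 := by
    have h1 : HasFDerivAt f (InnerProductSpace.toDual ℝ E g) (x + (0:ℝ) • (y - x)) := by
      simpa using hx.hasFDerivAt
    have h2 := h1.comp_hasDerivAt 0 hline; simp at h2; exact h2
  have key : ∀ s ∈ Ioc (0:ℝ) 1, slope φ 0 s ≤ f y - f x := by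
    intro s hs
    have hconv : φ s ≤ (1 - s) * f x + s * f y := by
      have h2 : x + s • (y - x) = (1 - s) • x + s • y := by
        rw [sub_smul, one_smul, smul_sub]; abel
      have := hf.2 (mem_univ x) (mem_univ y) (by linarith [hs.2] : (0:ℝ) ≤ 1 - s)
        hs.1.le (by ring)
      simpa [hφdef, h2, smul_eq_mul] using this
    have hs0 : (0:ℝ) < s := hs.1
    have h0 : φ 0 = f x := by simp [hφdef]
    rw [slope_def_field, div_le_iff₀ (by simpa using hs0)]
    rw [h0]; nlinarith [hconv]
  have htend : Filter.Tendsto (slope φ 0) (nhdsWithin 0 (Ioi 0)) (nhds ((inner ℝ g (y - x) : ℝ))) := by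
    have := hasDerivAt_iff_tendsto_slope.mp hφ
    exact this.mono_left (nhdsWithin_mono 0 (fun s hs => ne_of_gt hs))
  have hle : (inner ℝ g (y - x) : ℝ) ≤ f y - f x := by
    refine le_of_tendsto htend ?_
    filter_upwards [Ioc_mem_nhdsGT_of_mem (by norm_num : (0:ℝ) ∈ Ico 0 1)] with s hs
    exact key s hs
  linarith

end Subgrad

-- gauge is convex
lemma gauge_convexOn {n : ℕ} {K : Set (Cn n)} (hKconv : Convex ℝ K)
    (habs : Absorbent ℝ K) : ConvexOn ℝ univ (gauge K) := by
  refine ⟨convex_univ, fun x _ y _ a b ha hb hab => ?_⟩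
  calc gauge K (a • x + b • y) ≤ gauge K (a • x) + gauge K (b • y) :=
        gauge_add_le hKconv habs _ _
    _ = a * gauge K x + b * gauge K y := by
        rw [gauge_smul_of_nonneg ha, gauge_smul_of_nonneg hb, smul_eq_mul, smul_eq_mul]
  -- done?

-- Euler: ⟪g, x⟫ = gauge K x when gradient exists at x
lemma euler {n : ℕ} {K : Set (Cn n)} {x g : Cn n}
    (hx : HasGradientAt (gauge K) g x) : (inner ℝ g x : ℝ) = gauge K x := by
  have hline : HasDerivAt (fun s : ℝ => s • x) x 1 := by
    simpa using (hasDerivAt_id (1:ℝ)).smul_const x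
  have hψ : HasDerivAt (fun s : ℝ => gauge K (s • x)) ((inner ℝ g x : ℝ)) 1 := by
    have h1 : HasFDerivAt (gauge K) (InnerProductSpace.toDual ℝ (Cn n) g) ((1:ℝ) • x) := by
      simpa using hx.hasFDerivAt
    have h2 := h1.comp_hasDerivAt 1 hline; simp at h2; exact h2
  have heq : (fun s : ℝ => gauge K (s • x)) =ᶠ[nhds 1] (fun s : ℝ => s * gauge K x) := by
    filter_upwards [lt_mem_nhds (by norm_num : (0:ℝ) < 1)] with s hs
    rw [gauge_smul_of_nonneg hs.le, smul_eq_mul]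
  have hψ' : HasDerivAt (fun s : ℝ => s * gauge K x) ((inner ℝ g x : ℝ)) 1 :=
    hψ.congr_of_eventuallyEq heq.symm
  have := (hasDerivAt_mul_const (gauge K x)).unique hψ'
  exact this.symm

lemma gauge_le_of_polar_bound {n : ℕ} {K : Set (Cn n)} (hKcomp : IsCompact K)
    (hKconv : Convex ℝ K) (hK0 : (0 : Cn n) ∈ interior K) {v : Cn n} {M : ℝ}
    (hM : 0 ≤ M) (hb : ∀ z ∈ polarC K, (inner ℝ v z : ℝ) ≤ M) : gauge K v ≤ M := by
  refine le_of_forall_gt_imp_ge_of_dense fun c hc => ?_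
  have hc0 : 0 < c := lt_of_le_of_lt hM hc
  by_cases hvK : v ∈ (c • K : Set (Cn n))
  · exact gauge_le_of_mem hc0.le hvK
  exfalso
  obtain ⟨f, s, hfa, hfv⟩ := geometric_hahn_banach_closed_point
    (hKconv.smul c) (hKcomp.smul c).isClosed hvK
  have h0s : 0 < s := by
    have : (0 : Cn n) ∈ c • K := ⟨0, interior_subset hK0, smul_zero c⟩
    simpa using hfa 0 this
  set z₀ : Cn n := (InnerProductSpace.toDual ℝ (Cn n)).symm f with hz₀
  have hfapp : ∀ w : Cn n, (inner ℝ z₀ w : ℝ) = f w := fun w =>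
    InnerProductSpace.toDual_symm_apply
  set z : Cn n := (c / s) • z₀ with hz
  have hzpol : z ∈ polarC K := by
    intro x hx
    rw [← rinner_eq]
    have h1 : f (c • x) < s := hfa _ ⟨x, hx, rfl⟩
    have h2 : (inner ℝ x z : ℝ) = (c / s) * f x := by
      rw [real_inner_comm, hz, real_inner_smul_left, hfapp]
    rw [h2]
    have h3 : f (c • x) = c * f x := by simp
    rw [h3] at h1
    rw [div_mul_eq_mul_div, div_le_one h0s]
    nlinarith
  have : (inner ℝ v z : ℝ) ≤ M := hb z hzpol
  have h4 : (inner ℝ v z : ℝ) = (c / s) * f v := by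
    rw [real_inner_comm, hz, real_inner_smul_left, hfapp]
  rw [h4] at this
  have : c < c := by
    calc c = (c / s) * s := by field_simp
    _ < (c / s) * f v := by
        apply mul_lt_mul_of_pos_left hfv (div_pos hc0 h0s)
    _ ≤ M := this
    _ < c := hc
  exact lt_irrefl _ this


/-- for a convex body `K ⊂ ℂⁿ` with gauge differentiable near `∂K` and a closed
characteristic `γ : [0,T] → ∂K`, the `g_K`-length of `γ` is at most
`T · sup {ω(x,y) : x, y ∈ K°} = T / c_J(K)`. -/
theorem characteristic_length_upper_bound {n : ℕ} (K : Set (Cn n))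
    (hKcomp : IsCompact K) (hKconv : Convex ℝ K) (hK0 : (0 : Cn n) ∈ interior K)
    (gradg : Cn n → Cn n) (U : Set (Cn n)) (hUopen : IsOpen U) (hUfr : frontier K ⊆ U)
    (hgrad : ∀ x ∈ U, HasGradientAt (gauge K) (gradg x) x)
    (T : ℝ) (hT : 0 < T) (γ : ℝ → Cn n)
    (hbd : ∀ t ∈ Icc (0 : ℝ) T, γ t ∈ frontier K)
    (hclosed : γ 0 = γ T)
    (hchar : ∀ t ∈ Icc (0 : ℝ) T, HasDerivAt γ (Jmul (gradg (γ t))) t) :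
    (∫ t in (0 : ℝ)..T, gauge K (Jmul (gradg (γ t)))) ≤
      T * sSup {r : ℝ | ∃ x ∈ polarC K, ∃ y ∈ polarC K, r = symp x y} := by
  set S := {r : ℝ | ∃ x ∈ polarC K, ∃ y ∈ polarC K, r = symp x y} with hS
  set M := sSup S with hM
  have hKnhds : K ∈ nhds (0 : Cn n) := mem_interior_iff_mem_nhds.mp hK0
  have habs : Absorbent ℝ K := absorbent_nhds_zero hKnhds
  -- polar is bounded
  obtain ⟨ε, hε, hball⟩ := Metric.mem_nhds_iff.mp hKnhds
  have hpolar_bdd : ∀ y ∈ polarC K, ‖y‖ ≤ 2 / ε := by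
    intro y hy
    rcases eq_or_ne y 0 with rfl | hy0
    · simp; positivity
    have hx : ((ε / 2) * ‖y‖⁻¹ : ℝ) • y ∈ K := by
      apply hball
      simp only [Metric.mem_ball, dist_zero_right, norm_smul]
      rw [norm_mul, norm_inv, norm_norm, Real.norm_eq_abs, abs_of_pos (by positivity)]
      rw [mul_assoc, inv_mul_cancel₀ (norm_ne_zero_iff.mpr hy0)]
      simpa using by linarith
    have h1 := hy _ hx
    rw [← rinner_eq, real_inner_smul_left, real_inner_self_eq_norm_sq] at h1
    have hny : 0 < ‖y‖ := norm_pos_iff.mpr hy0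
    rw [le_div_iff₀ hε]
    have h2 : ε / 2 * ‖y‖⁻¹ * ‖y‖ ^ 2 = ε / 2 * ‖y‖ := by field_simp
    nlinarith [h1, h2]
  have hSbdd : BddAbove S := by
    refine ⟨(2 / ε) * (2 / ε), fun r hr => ?_⟩
    obtain ⟨x, hx, y, hy, rfl⟩ := hr
    calc symp x y ≤ ‖(inner ℂ x y : ℂ)‖ := by
          exact Complex.im_le_norm _
      _ ≤ ‖x‖ * ‖y‖ := norm_inner_le_norm x y
      _ ≤ (2 / ε) * (2 / ε) := by
          have := hpolar_bdd x hx; have := hpolar_bdd y hy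
          have hx0 : (0:ℝ) ≤ ‖x‖ := norm_nonneg _
          have hy0 : (0:ℝ) ≤ ‖y‖ := norm_nonneg _
          nlinarith
  have h0polar : (0 : Cn n) ∈ polarC K := by intro x _; simp
  have hM0 : 0 ≤ M := le_csSup hSbdd ⟨0, h0polar, 0, h0polar, by simp [symp]⟩
  -- gradient at frontier point is in the polar
  have hgradpolar : ∀ x ∈ frontier K, gradg x ∈ polarC K := by
    intro x hx x' hx'
    have hgx := hgrad x (hUfr hx)
    have hgauge1 : gauge K x = 1 :=
      (gauge_eq_one_iff_mem_frontier hKconv hKnhds).mpr hx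
    have heuler : (inner ℝ (gradg x) x : ℝ) = 1 := by rw [euler hgx, hgauge1]
    have hsub := subgrad (gauge_convexOn hKconv habs) hgx x'
    have hconv : (inner ℝ (gradg x) (x' - x) : ℝ) ≤ gauge K x' - 1 := by
      rw [hgauge1] at hsub; linarith
    have hle1 : gauge K x' ≤ 1 := gauge_le_one_of_mem hx'
    rw [← rinner_eq, real_inner_comm]
    have : (inner ℝ (gradg x) x' : ℝ) = (inner ℝ (gradg x) (x' - x) : ℝ) + (inner ℝ (gradg x) x : ℝ) := by
      rw [inner_sub_right]; ring
    rw [this, heuler]; linarith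
  -- pointwise bound
  have hpoint : ∀ t ∈ Icc (0:ℝ) T, gauge K (Jmul (gradg (γ t))) ≤ M := by
    intro t ht
    set w := gradg (γ t) with hw
    have hwpol : w ∈ polarC K := hgradpolar _ (hbd t ht)
    refine gauge_le_of_polar_bound hKcomp hKconv hK0 hM0 fun z hz => ?_
    have : (inner ℝ (Jmul w) z : ℝ) = symp w z := by
      rw [rinner_eq, Jmul]
      rw [inner_smul_left]
      simp [symp, Complex.ext_iff]
    rw [this]
    exact le_csSup hSbdd ⟨w, hwpol, z, hz, rfl⟩
  by_cases hint : IntervalIntegrable (fun t => gauge K (Jmul (gradg (γ t))))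
      MeasureTheory.volume 0 T
  · have := intervalIntegral.integral_mono_on hT.le hint (intervalIntegrable_const (c := M)) hpoint
    calc (∫ t in (0:ℝ)..T, gauge K (Jmul (gradg (γ t)))) ≤ ∫ _t in (0:ℝ)..T, M := this
      _ = T * M := by simp [mul_comm]
  · rw [intervalIntegral.integral_undef hint]
    positivity
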